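/- Every linear 3-uniform tripartite hypergraph is a conditionally non-redundant instance of CSP(P | Q) where P = {000, 001, 010, 100} and Q = P ∪ {111}: if H = (V, E) is a tripartite 3-uniform hypergraph in which any two distinct hyperedges intersect in at most one vertex, then for each e ∈ E the assignment ψ_e mapping vertices of e to 1 and all others to 0 witnesses conditional non-redundancy, so NRD(P | Q, n) ≥ |E| for any such H on n vertices. -/

import Mathlib

/-- `P = {000, 001, 010, 100}`: Boolean triples of Hamming weight at most 1. -/
def P3 : Set (Bool × Bool × Bool) :=
  {(false, false, false), (false, false, true), (false, true, false), (true, false, false)}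

/-- `Q = P ∪ {111}`. -/
def Q3 : Set (Bool × Bool × Bool) := insert (true, true, true) P3

/-- Maximum size of a conditionally non-redundant instance of `CSP(P | Q)`
(predicates of arity 3, constraints given as triples of variables from `V`). -/
noncomputable def condNRD3 (P Q : Set (Bool × Bool × Bool)) (V : Type*) [Fintype V] : ℕ :=
  sSup {m : ℕ | ∃ E : Finset (V × V × V),
    (∀ e ∈ E, ∃ ψ : V → Bool,
      (ψ e.1, ψ e.2.1, ψ e.2.2) ∈ Q \ P ∧
      ∀ e' ∈ E, ((ψ e'.1, ψ e'.2.1, ψ e'.2.2) ∈ P ↔ e' ≠ e)) ∧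
    E.card = m}

lemma P3_mem (a b c : Bool) : (a, b, c) ∈ P3 ↔ ¬(a = true ∧ b = true) ∧
    ¬(a = true ∧ c = true) ∧ ¬(b = true ∧ c = true) := by
  cases a <;> cases b <;> cases c <;> simp [P3]

/-- Every linear tripartite 3-uniform hypergraph (with parts `A`, `B`, `C`) is a
conditionally non-redundant instance of `CSP(P | Q)` with `P = {000,001,010,100}` and
`Q = P ∪ {111}`: for each hyperedge `e`, the assignment mapping exactly the vertices
of `e` to `1` is a witness; consequently `NRD(P | Q) ≥ |E|` on the vertex set
`A ⊕ B ⊕ C`. -/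
theorem linear_hypergraph_cond_nonredundant
    {A B C : Type*} [Fintype A] [Fintype B] [Fintype C]
    [DecidableEq A] [DecidableEq B] [DecidableEq C]
    (E : Finset (A × B × C))
    (hlinear : ∀ e ∈ E, ∀ e' ∈ E, e ≠ e' →
      ¬(e.1 = e'.1 ∧ e.2.1 = e'.2.1) ∧ ¬(e.1 = e'.1 ∧ e.2.2 = e'.2.2) ∧
      ¬(e.2.1 = e'.2.1 ∧ e.2.2 = e'.2.2)) :
    (∀ e ∈ E,
      let ψ : (A ⊕ B ⊕ C) → Bool := fun x =>
        decide (x = Sum.inl e.1 ∨ x = Sum.inr (Sum.inl e.2.1) ∨ x = Sum.inr (Sum.inr e.2.2))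
      (ψ (Sum.inl e.1), ψ (Sum.inr (Sum.inl e.2.1)), ψ (Sum.inr (Sum.inr e.2.2))) ∈ Q3 \ P3 ∧
      ∀ e' ∈ E, e' ≠ e →
        (ψ (Sum.inl e'.1), ψ (Sum.inr (Sum.inl e'.2.1)), ψ (Sum.inr (Sum.inr e'.2.2))) ∈ P3) ∧
    E.card ≤ condNRD3 P3 Q3 (A ⊕ B ⊕ C) := by
  have key : ∀ e ∈ E, ∀ e' ∈ E, e' ≠ e →
      (let ψ : (A ⊕ B ⊕ C) → Bool := fun x =>
        decide (x = Sum.inl e.1 ∨ x = Sum.inr (Sum.inl e.2.1) ∨ x = Sum.inr (Sum.inr e.2.2))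
      (ψ (Sum.inl e'.1), ψ (Sum.inr (Sum.inl e'.2.1)), ψ (Sum.inr (Sum.inr e'.2.2)))) ∈ P3 := by
    intro e he e' he' hne
    obtain ⟨h1, h2, h3⟩ := hlinear e' he' e he hne
    rw [P3_mem]
    simp only [decide_eq_true_eq, Sum.inl.injEq, Sum.inr.injEq]
    refine ⟨?_, ?_, ?_⟩ <;> simp_all
  have main : ∀ e ∈ E,
      let ψ : (A ⊕ B ⊕ C) → Bool := fun x =>
        decide (x = Sum.inl e.1 ∨ x = Sum.inr (Sum.inl e.2.1) ∨ x = Sum.inr (Sum.inr e.2.2))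
      (ψ (Sum.inl e.1), ψ (Sum.inr (Sum.inl e.2.1)), ψ (Sum.inr (Sum.inr e.2.2))) ∈ Q3 \ P3 ∧
      ∀ e' ∈ E, e' ≠ e →
        (ψ (Sum.inl e'.1), ψ (Sum.inr (Sum.inl e'.2.1)), ψ (Sum.inr (Sum.inr e'.2.2))) ∈ P3 := by
    intro e he
    refine ⟨?_, fun e' he' hne => key e he e' he' hne⟩
    simp [Q3, P3]
  refine ⟨main, ?_⟩
  -- the cardinality bound
  set f : (A × B × C) → ((A ⊕ B ⊕ C) × (A ⊕ B ⊕ C) × (A ⊕ B ⊕ C)) :=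
    fun e => (Sum.inl e.1, Sum.inr (Sum.inl e.2.1), Sum.inr (Sum.inr e.2.2)) with hf
  have hfinj : Function.Injective f := by
    intro x y hxy
    simp only [hf, Prod.mk.injEq, Sum.inl.injEq, Sum.inr.injEq] at hxy
    exact Prod.ext hxy.1 (Prod.ext hxy.2.1 hxy.2.2)
  have hmem : E.card ∈ {m : ℕ | ∃ E' : Finset ((A ⊕ B ⊕ C) × (A ⊕ B ⊕ C) × (A ⊕ B ⊕ C)),
      (∀ e ∈ E', ∃ ψ : (A ⊕ B ⊕ C) → Bool,
        (ψ e.1, ψ e.2.1, ψ e.2.2) ∈ Q3 \ P3 ∧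
        ∀ e' ∈ E', ((ψ e'.1, ψ e'.2.1, ψ e'.2.2) ∈ P3 ↔ e' ≠ e)) ∧
      E'.card = E.card} := by
    refine ⟨E.image f, ?_, Finset.card_image_of_injective _ hfinj⟩
    intro fe hfe
    obtain ⟨e, he, rfl⟩ := Finset.mem_image.mp hfe
    refine ⟨fun x => decide (x = Sum.inl e.1 ∨ x = Sum.inr (Sum.inl e.2.1) ∨
      x = Sum.inr (Sum.inr e.2.2)), ?_, ?_⟩
    · exact (main e he).1
    · intro fe' hfe'
      obtain ⟨e', he', rfl⟩ := Finset.mem_image.mp hfe'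
      constructor
      · intro hp heq
        apply hfinj at heq
        subst heq
        revert hp
        simp [P3, hf]
      · intro hne
        exact key e he e' he' (fun h => hne (by rw [h]))
  have hbdd : BddAbove {m : ℕ | ∃ E' : Finset ((A ⊕ B ⊕ C) × (A ⊕ B ⊕ C) × (A ⊕ B ⊕ C)),
      (∀ e ∈ E', ∃ ψ : (A ⊕ B ⊕ C) → Bool,
        (ψ e.1, ψ e.2.1, ψ e.2.2) ∈ Q3 \ P3 ∧
        ∀ e' ∈ E', ((ψ e'.1, ψ e'.2.1, ψ e'.2.2) ∈ P3 ↔ e' ≠ e)) ∧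
      E'.card = m} := by
    refine ⟨Fintype.card ((A ⊕ B ⊕ C) × (A ⊕ B ⊕ C) × (A ⊕ B ⊕ C)), ?_⟩
    rintro m ⟨E', _, rfl⟩
    exact E'.card_le_univ.trans_eq (Finset.card_univ)
  exact le_csSup hbdd hmem
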